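/- arXiv:1604.06286 — 2 statements merged into one kernel-verified Lean document; each statement's English description precedes it below -/
import Mathlib

section
/- Let n = 2k+1 with k ≥ 2 (so n ≥ 5 odd), let A be the Cartan matrix of type A_n, and let σ be any permutation of {1,…,n}. If α and β are positive roots of type A_n (written in simple-root coordinates, viewed as integer vectors in ℤⁿ) satisfying B_σ·α = B_σ·β, then α = β. -/
open Matrix

/-- The Cartan matrix of type `Aₙ` (nodes indexed `0, …, n-1`). -/
def cartanA (n : ℕ) : Matrix (Fin n) (Fin n) ℤ :=
  fun i j => if i = j then 2
    else if i.val + 1 = j.val ∨ j.val + 1 = i.val then -1 else 0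

/-- The acyclic exchange matrix `B_σ` attached to a Cartan matrix `A` and a permutation `σ`:
`b i i = 0`, `b i j = -a i j` if `σ i < σ j`, and `b i j = a i j` if `σ i > σ j`. -/
def Bmat {n : ℕ} (A : Matrix (Fin n) (Fin n) ℤ) (σ : Equiv.Perm (Fin n)) :
    Matrix (Fin n) (Fin n) ℤ :=
  fun i j => if i = j then 0 else if σ i < σ j then -A i j else A i j

/-- The positive roots of type `Aₙ` in simple-root coordinates (nodes `0`-indexed):
vectors equal to `1` on an interval `[a, b]` of indices and `0` elsewhere. -/
def IsPosRootA (n : ℕ) (v : Fin n → ℤ) : Prop :=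
  ∃ a b : ℕ, a ≤ b ∧ b < n ∧
    v = fun i => if a ≤ i.val ∧ i.val ≤ b then 1 else 0

lemma bmat_eq_zero {n : ℕ} (σ : Equiv.Perm (Fin n)) {i j : Fin n}
    (h : ¬(i.val + 1 = j.val ∨ j.val + 1 = i.val)) :
    Bmat (cartanA n) σ i j = 0 := by
  have hij : i ≠ j ∨ i = j := (em (i = j)).symm
  unfold Bmat cartanA
  split_ifs <;> simp_all

lemma bmat_pm {n : ℕ} (σ : Equiv.Perm (Fin n)) {i j : Fin n}
    (h : i.val + 1 = j.val ∨ j.val + 1 = i.val) :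
    Bmat (cartanA n) σ i j = 1 ∨ Bmat (cartanA n) σ i j = -1 := by
  have hij : i ≠ j := by
    intro e; subst e; omega
  unfold Bmat cartanA
  rw [if_neg hij]
  split_ifs <;> simp_all

lemma mulVec_adj {n : ℕ} (σ : Equiv.Perm (Fin n)) (γ : Fin n → ℤ) (m : ℕ) (h2 : m + 2 < n) :
    (Bmat (cartanA n) σ).mulVec γ ⟨m + 1, by omega⟩
      = Bmat (cartanA n) σ ⟨m + 1, by omega⟩ ⟨m, by omega⟩ * γ ⟨m, by omega⟩
        + Bmat (cartanA n) σ ⟨m + 1, by omega⟩ ⟨m + 2, h2⟩ * γ ⟨m + 2, h2⟩ := by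
  have he : (Bmat (cartanA n) σ).mulVec γ ⟨m + 1, by omega⟩
      = ∑ j : Fin n, Bmat (cartanA n) σ ⟨m + 1, by omega⟩ j * γ j := rfl
  rw [he, ← Finset.sum_subset
      (Finset.subset_univ ({⟨m, by omega⟩, ⟨m + 2, h2⟩} : Finset (Fin n)))]
  · rw [Finset.sum_insert (by simp [Fin.ext_iff]), Finset.sum_singleton]
  · intro j _ hj
    simp only [Finset.mem_insert, Finset.mem_singleton, Fin.ext_iff] at hj
    rw [bmat_eq_zero σ (by simp only [Fin.mk_one]; omega), zero_mul]

lemma mulVec_zero' {n : ℕ} (σ : Equiv.Perm (Fin n)) (γ : Fin n → ℤ) (h1 : 1 < n) :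
    (Bmat (cartanA n) σ).mulVec γ ⟨0, by omega⟩
      = Bmat (cartanA n) σ ⟨0, by omega⟩ ⟨1, h1⟩ * γ ⟨1, h1⟩ := by
  have he : (Bmat (cartanA n) σ).mulVec γ ⟨0, by omega⟩
      = ∑ j : Fin n, Bmat (cartanA n) σ ⟨0, by omega⟩ j * γ j := rfl
  rw [he, ← Finset.sum_subset (Finset.subset_univ ({⟨1, h1⟩} : Finset (Fin n)))]
  · rw [Finset.sum_singleton]
  · intro j _ hj
    simp only [Finset.mem_singleton, Fin.ext_iff] at hj
    rw [bmat_eq_zero σ (by simp; omega), zero_mul]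

lemma case0_small : ∀ a b c d : Fin 6,
    ((if a.val ≤ 1 ∧ 1 ≤ b.val then (1:ℤ) else 0) - (if c.val ≤ 1 ∧ 1 ≤ d.val then 1 else 0) = 0) →
    ((if a.val ≤ 3 ∧ 3 ≤ b.val then (1:ℤ) else 0) - (if c.val ≤ 3 ∧ 3 ≤ d.val then 1 else 0) = 0) →
    ((if a.val ≤ 2 ∧ 2 ≤ b.val then (1:ℤ) else 0) - (if c.val ≤ 2 ∧ 2 ≤ d.val then 1 else 0)
         = (if a.val ≤ 0 ∧ 0 ≤ b.val then (1:ℤ) else 0) - (if c.val ≤ 0 ∧ 0 ≤ d.val then 1 else 0)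
       ∨ (if a.val ≤ 2 ∧ 2 ≤ b.val then (1:ℤ) else 0) - (if c.val ≤ 2 ∧ 2 ≤ d.val then 1 else 0)
         = -((if a.val ≤ 0 ∧ 0 ≤ b.val then (1:ℤ) else 0) - (if c.val ≤ 0 ∧ 0 ≤ d.val then 1 else 0))) →
    ((if a.val ≤ 4 ∧ 4 ≤ b.val then (1:ℤ) else 0) - (if c.val ≤ 4 ∧ 4 ≤ d.val then 1 else 0)
         = (if a.val ≤ 2 ∧ 2 ≤ b.val then (1:ℤ) else 0) - (if c.val ≤ 2 ∧ 2 ≤ d.val then 1 else 0)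
       ∨ (if a.val ≤ 4 ∧ 4 ≤ b.val then (1:ℤ) else 0) - (if c.val ≤ 4 ∧ 4 ≤ d.val then 1 else 0)
         = -((if a.val ≤ 2 ∧ 2 ≤ b.val then (1:ℤ) else 0) - (if c.val ≤ 2 ∧ 2 ≤ d.val then 1 else 0))) →
    (if a.val ≤ 0 ∧ 0 ≤ b.val then (1:ℤ) else 0) - (if c.val ≤ 0 ∧ 0 ≤ d.val then 1 else 0) = 0 := by
  decide

lemma case0 (a b c d : ℕ)
    (h1 : (if a ≤ 1 ∧ 1 ≤ b then (1:ℤ) else 0) - (if c ≤ 1 ∧ 1 ≤ d then 1 else 0) = 0)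
    (h3 : (if a ≤ 3 ∧ 3 ≤ b then (1:ℤ) else 0) - (if c ≤ 3 ∧ 3 ≤ d then 1 else 0) = 0)
    (h02 : (if a ≤ 2 ∧ 2 ≤ b then (1:ℤ) else 0) - (if c ≤ 2 ∧ 2 ≤ d then 1 else 0)
         = (if a ≤ 0 ∧ 0 ≤ b then (1:ℤ) else 0) - (if c ≤ 0 ∧ 0 ≤ d then 1 else 0)
       ∨ (if a ≤ 2 ∧ 2 ≤ b then (1:ℤ) else 0) - (if c ≤ 2 ∧ 2 ≤ d then 1 else 0)
         = -((if a ≤ 0 ∧ 0 ≤ b then (1:ℤ) else 0) - (if c ≤ 0 ∧ 0 ≤ d then 1 else 0)))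
    (h24 : (if a ≤ 4 ∧ 4 ≤ b then (1:ℤ) else 0) - (if c ≤ 4 ∧ 4 ≤ d then 1 else 0)
         = (if a ≤ 2 ∧ 2 ≤ b then (1:ℤ) else 0) - (if c ≤ 2 ∧ 2 ≤ d then 1 else 0)
       ∨ (if a ≤ 4 ∧ 4 ≤ b then (1:ℤ) else 0) - (if c ≤ 4 ∧ 4 ≤ d then 1 else 0)
         = -((if a ≤ 2 ∧ 2 ≤ b then (1:ℤ) else 0) - (if c ≤ 2 ∧ 2 ≤ d then 1 else 0))) :
    (if a ≤ 0 ∧ 0 ≤ b then (1:ℤ) else 0) - (if c ≤ 0 ∧ 0 ≤ d then 1 else 0) = 0 := by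
  have e0a : (a ≤ 0 ∧ 0 ≤ b) ↔ (min a 5 ≤ 0 ∧ 0 ≤ min b 5) := by omega
  have e1a : (a ≤ 1 ∧ 1 ≤ b) ↔ (min a 5 ≤ 1 ∧ 1 ≤ min b 5) := by omega
  have e2a : (a ≤ 2 ∧ 2 ≤ b) ↔ (min a 5 ≤ 2 ∧ 2 ≤ min b 5) := by omega
  have e3a : (a ≤ 3 ∧ 3 ≤ b) ↔ (min a 5 ≤ 3 ∧ 3 ≤ min b 5) := by omega
  have e4a : (a ≤ 4 ∧ 4 ≤ b) ↔ (min a 5 ≤ 4 ∧ 4 ≤ min b 5) := by omega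
  have e0c : (c ≤ 0 ∧ 0 ≤ d) ↔ (min c 5 ≤ 0 ∧ 0 ≤ min d 5) := by omega
  have e1c : (c ≤ 1 ∧ 1 ≤ d) ↔ (min c 5 ≤ 1 ∧ 1 ≤ min d 5) := by omega
  have e2c : (c ≤ 2 ∧ 2 ≤ d) ↔ (min c 5 ≤ 2 ∧ 2 ≤ min d 5) := by omega
  have e3c : (c ≤ 3 ∧ 3 ≤ d) ↔ (min c 5 ≤ 3 ∧ 3 ≤ min d 5) := by omega
  have e4c : (c ≤ 4 ∧ 4 ≤ d) ↔ (min c 5 ≤ 4 ∧ 4 ≤ min d 5) := by omega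
  simp only [e0a, e1a, e2a, e3a, e4a, e0c, e1c, e2c, e3c, e4c] at h1 h3 h02 h24 ⊢
  exact case0_small ⟨min a 5, by omega⟩ ⟨min b 5, by omega⟩ ⟨min c 5, by omega⟩
    ⟨min d 5, by omega⟩ h1 h3 h02 h24

set_option maxHeartbeats 1000000 in
/-- In type `Aₙ` with `n = 2k+1` odd, `n ≥ 5`, the acyclic exchange matrix `B_σ` is
injective on the set of positive roots. -/
theorem Bmat_injOn_posRoots_typeA (k : ℕ) (hk : 2 ≤ k)
    (σ : Equiv.Perm (Fin (2 * k + 1))) (α β : Fin (2 * k + 1) → ℤ)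
    (hα : IsPosRootA (2 * k + 1) α) (hβ : IsPosRootA (2 * k + 1) β)
    (h : (Bmat (cartanA (2 * k + 1)) σ).mulVec α =
         (Bmat (cartanA (2 * k + 1)) σ).mulVec β) :
    α = β := by
  obtain ⟨a, b, hab, hbn, hαe⟩ := hα
  obtain ⟨c, d, hcd, hdn, hβe⟩ := hβ
  have hker : (Bmat (cartanA (2 * k + 1)) σ).mulVec (α - β) = 0 := by
    rw [Matrix.mulVec_sub, h, sub_self]
  have v : ∀ m (hm : m < 2 * k + 1), (α - β) ⟨m, hm⟩
      = (if a ≤ m ∧ m ≤ b then (1:ℤ) else 0) - (if c ≤ m ∧ m ≤ d then 1 else 0) := by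
    intro m hm
    show α ⟨m, hm⟩ - β ⟨m, hm⟩ = _
    rw [hαe, hβe]
  have step : ∀ m (h2 : m + 2 < 2 * k + 1) (i j : Fin (2 * k + 1)),
      i.val = m + 2 → j.val = m →
      ((α - β) i = (α - β) j ∨ (α - β) i = -((α - β) j)) := by
    intro m h2 i j hi hj
    have e := mulVec_adj σ (α - β) m h2
    have e0 : (0:ℤ) = _ := (congrFun hker ⟨m + 1, by omega⟩).symm.trans e
    rw [show i = ⟨m + 2, h2⟩ from Fin.ext hi,
        show j = ⟨m, by omega⟩ from Fin.ext hj]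
    rcases bmat_pm σ (i := (⟨m + 1, by omega⟩ : Fin (2 * k + 1)))
        (j := (⟨m, by omega⟩ : Fin (2 * k + 1))) (Or.inr rfl) with s | s <;>
      rcases bmat_pm σ (i := (⟨m + 1, by omega⟩ : Fin (2 * k + 1)))
          (j := (⟨m + 2, h2⟩ : Fin (2 * k + 1))) (Or.inl rfl) with t | t <;>
        rw [s, t] at e0 <;> omega
  have g1 : (α - β) ⟨1, by omega⟩ = 0 := by
    have e := mulVec_zero' σ (α - β) (by omega)
    have e0 : (0:ℤ) = _ := (congrFun hker ⟨0, by omega⟩).symm.trans e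
    rcases bmat_pm σ (i := (⟨0, by omega⟩ : Fin (2 * k + 1)))
        (j := (⟨1, by omega⟩ : Fin (2 * k + 1))) (Or.inl rfl) with s | s <;>
      rw [s] at e0 <;> omega
  have V1 : (if a ≤ 1 ∧ 1 ≤ b then (1:ℤ) else 0) - (if c ≤ 1 ∧ 1 ≤ d then 1 else 0) = 0 := by
    rw [← v 1 (by omega)]; exact g1
  have H13 : (if a ≤ 3 ∧ 3 ≤ b then (1:ℤ) else 0) - (if c ≤ 3 ∧ 3 ≤ d then 1 else 0)
         = (if a ≤ 1 ∧ 1 ≤ b then (1:ℤ) else 0) - (if c ≤ 1 ∧ 1 ≤ d then 1 else 0)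
       ∨ (if a ≤ 3 ∧ 3 ≤ b then (1:ℤ) else 0) - (if c ≤ 3 ∧ 3 ≤ d then 1 else 0)
         = -((if a ≤ 1 ∧ 1 ≤ b then (1:ℤ) else 0) - (if c ≤ 1 ∧ 1 ≤ d then 1 else 0)) := by
    rw [← v 3 (by omega), ← v 1 (by omega)]
    exact step 1 (by omega) _ _ rfl rfl
  have V3 : (if a ≤ 3 ∧ 3 ≤ b then (1:ℤ) else 0) - (if c ≤ 3 ∧ 3 ≤ d then 1 else 0) = 0 := by
    rcases H13 with h' | h' <;> rw [h', V1]
    exact neg_zero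
  have H02 : (if a ≤ 2 ∧ 2 ≤ b then (1:ℤ) else 0) - (if c ≤ 2 ∧ 2 ≤ d then 1 else 0)
         = (if a ≤ 0 ∧ 0 ≤ b then (1:ℤ) else 0) - (if c ≤ 0 ∧ 0 ≤ d then 1 else 0)
       ∨ (if a ≤ 2 ∧ 2 ≤ b then (1:ℤ) else 0) - (if c ≤ 2 ∧ 2 ≤ d then 1 else 0)
         = -((if a ≤ 0 ∧ 0 ≤ b then (1:ℤ) else 0) - (if c ≤ 0 ∧ 0 ≤ d then 1 else 0)) := by
    rw [← v 2 (by omega), ← v 0 (by omega)]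
    exact step 0 (by omega) _ _ rfl rfl
  have H24 : (if a ≤ 4 ∧ 4 ≤ b then (1:ℤ) else 0) - (if c ≤ 4 ∧ 4 ≤ d then 1 else 0)
         = (if a ≤ 2 ∧ 2 ≤ b then (1:ℤ) else 0) - (if c ≤ 2 ∧ 2 ≤ d then 1 else 0)
       ∨ (if a ≤ 4 ∧ 4 ≤ b then (1:ℤ) else 0) - (if c ≤ 4 ∧ 4 ≤ d then 1 else 0)
         = -((if a ≤ 2 ∧ 2 ≤ b then (1:ℤ) else 0) - (if c ≤ 2 ∧ 2 ≤ d then 1 else 0)) := by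
    rw [← v 4 (by omega), ← v 2 (by omega)]
    exact step 2 (by omega) _ _ rfl rfl
  have g0 : (α - β) ⟨0, by omega⟩ = 0 := by
    rw [v 0 (by omega)]
    exact case0 a b c d V1 V3 H02 H24
  have main : ∀ m (hm : m < 2 * k + 1), (α - β) ⟨m, hm⟩ = 0 := by
    intro m
    induction m using Nat.strong_induction_on with
    | _ m ih =>
      intro hm
      rcases m with _ | _ | m
      · exact g0
      · exact g1
      · rcases step m hm ⟨m + 1 + 1, hm⟩ ⟨m, by omega⟩ rfl rfl with h' | h' <;>
          rw [ih m (by omega) (by omega)] at h' <;> simpa using h'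
  funext i
  have hz : α i - β i = 0 := main i.val i.isLt
  omega
end

section
/- Let n = 2k+1 with k ≥ 2 (so n ≥ 5 odd), let A be the Cartan matrix of type B_n, and let σ be any permutation of {1,…,n}. If α and β are positive roots of type B_n (written in simple-root coordinates, viewed as integer vectors in ℤⁿ) satisfying B_σ·α = B_σ·β, then α = β. -/
open Matrix

/-- The Cartan matrix of type `Bₙ` (nodes indexed `0, …, n-1`; the short root is the last
node): `a i i = 2`, consecutive nodes give `-1`, except `a (n-2) (n-1) = -2`. -/
def cartanB (n : ℕ) : Matrix (Fin n) (Fin n) ℤ :=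
  fun i j => if i = j then 2
    else if i.val + 1 = j.val then (if j.val = n - 1 then -2 else -1)
    else if j.val + 1 = i.val then -1 else 0

/-- The positive roots of type `Bₙ` in simple-root coordinates (nodes `0`-indexed):
either `1` on an interval `[a, b]` and `0` elsewhere, or `1` on `[a, b-1]`, `2` on
`[b, n-1]` and `0` elsewhere (with `a < b`). -/
def IsPosRootB (n : ℕ) (v : Fin n → ℤ) : Prop :=
  (∃ a b : ℕ, a ≤ b ∧ b < n ∧
    v = fun i => if a ≤ i.val ∧ i.val ≤ b then 1 else 0) ∨
  (∃ a b : ℕ, a < b ∧ b < n ∧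
    v = fun i => if b ≤ i.val then 2 else if a ≤ i.val then 1 else 0)

/-- Off-tridiagonal entries of `Bmat (cartanB n) σ` vanish. -/
lemma Bmat_cartanB_eq_zero {n : ℕ} (σ : Equiv.Perm (Fin n)) (i j : Fin n)
    (h1 : j.val + 1 ≠ i.val) (h2 : i.val + 1 ≠ j.val) :
    Bmat (cartanB n) σ i j = 0 := by
  by_cases hij : i = j
  · simp [Bmat, hij]
  · simp [Bmat, cartanB, hij, h1, h2]

lemma Bmat_cartanB_sq_left {n : ℕ} (σ : Equiv.Perm (Fin n)) (i j : Fin n)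
    (h : j.val + 1 = i.val) :
    (Bmat (cartanB n) σ i j) ^ 2 = 1 := by
  have hij : i ≠ j := by intro he; rw [he] at h; omega
  have h2 : i.val + 1 ≠ j.val := by omega
  simp only [Bmat, cartanB, hij, if_neg hij, h2, if_neg h2, h, if_pos h]
  split_ifs <;> simp_all

lemma Bmat_cartanB_sq_right_one {n : ℕ} (σ : Equiv.Perm (Fin n)) (i j : Fin n)
    (h : i.val + 1 = j.val) (h2 : j.val ≠ n - 1) :
    (Bmat (cartanB n) σ i j) ^ 2 = 1 := by
  have hij : i ≠ j := by intro he; rw [he] at h; omega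
  simp only [Bmat, cartanB, if_neg hij, h, if_pos rfl, if_neg h2]
  split_ifs <;> simp_all

lemma Bmat_cartanB_sq_right_four {n : ℕ} (σ : Equiv.Perm (Fin n)) (i j : Fin n)
    (h : i.val + 1 = j.val) (h2 : j.val = n - 1) :
    (Bmat (cartanB n) σ i j) ^ 2 = 4 := by
  have hij : i ≠ j := by intro he; rw [he] at h; omega
  simp only [Bmat, cartanB, if_neg hij, h, if_pos rfl, if_pos h2]
  split_ifs <;> simp_all

lemma Bmat_cartanB_ne_zero_right {n : ℕ} (σ : Equiv.Perm (Fin n)) (i j : Fin n)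
    (h : i.val + 1 = j.val) : Bmat (cartanB n) σ i j ≠ 0 := by
  have hij : i ≠ j := by intro he; rw [he] at h; omega
  simp only [Bmat, cartanB, if_neg hij, h, if_pos rfl]
  split_ifs <;> simp_all

/-- Row equations for a vector in the kernel. -/
lemma row_eq {n : ℕ} (σ : Equiv.Perm (Fin n)) (x : Fin n → ℤ)
    (hx : (Bmat (cartanB n) σ).mulVec x = 0) (i : Fin n) :
    ∑ j, Bmat (cartanB n) σ i j * x j = 0 := by
  have := congrFun hx i
  simpa [Matrix.mulVec, dotProduct] using this

/-- Interior row equation: only two neighbours survive. -/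
lemma row_eq_interior {n : ℕ} (σ : Equiv.Perm (Fin n)) (x : Fin n → ℤ)
    (hx : (Bmat (cartanB n) σ).mulVec x = 0) (m : ℕ)
    (pm : m < n) (pm1 : m - 1 < n) (pp1 : m + 1 < n) (h0 : 1 ≤ m) :
    Bmat (cartanB n) σ ⟨m, pm⟩ ⟨m - 1, pm1⟩ * x ⟨m - 1, pm1⟩ +
    Bmat (cartanB n) σ ⟨m, pm⟩ ⟨m + 1, pp1⟩ * x ⟨m + 1, pp1⟩ = 0 := by
  have hrow := row_eq σ x hx ⟨m, pm⟩
  rw [Finset.sum_eq_add_of_mem (⟨m - 1, pm1⟩ : Fin n) (⟨m + 1, pp1⟩ : Fin n)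
    (Finset.mem_univ _) (Finset.mem_univ _)
    (Fin.ne_of_val_ne (show m - 1 ≠ m + 1 by omega)) ?_] at hrow
  · exact hrow
  · intro c _ hc
    have h1 : c.val + 1 ≠ m := by
      intro he
      exact hc.1 (by simp [Fin.ext_iff]; omega)
    have h2 : m + 1 ≠ c.val := by
      intro he
      exact hc.2 (by simp [Fin.ext_iff]; omega)
    rw [Bmat_cartanB_eq_zero σ _ c h1 (by simpa using h2), zero_mul]

/-- First row equation. -/
lemma row_eq_zero' {n : ℕ} (σ : Equiv.Perm (Fin n)) (x : Fin n → ℤ)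
    (hx : (Bmat (cartanB n) σ).mulVec x = 0) (p0 : 0 < n) (p1 : 1 < n) :
    Bmat (cartanB n) σ ⟨0, p0⟩ ⟨1, p1⟩ * x ⟨1, p1⟩ = 0 := by
  have hrow := row_eq σ x hx ⟨0, p0⟩
  rw [Finset.sum_eq_single_of_mem (⟨1, p1⟩ : Fin n) (Finset.mem_univ _) ?_] at hrow
  · exact hrow
  · intro c _ hc
    have h1 : c.val + 1 ≠ 0 := by omega
    have h2 : (0 : ℕ) + 1 ≠ c.val := by
      intro he
      exact hc (by simp [Fin.ext_iff]; omega)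
    rw [Bmat_cartanB_eq_zero σ _ c h1 h2, zero_mul]

lemma posRoot_zero_mem {n : ℕ} (v : Fin n → ℤ) (hn : 0 < n) (hv : IsPosRootB n v) :
    0 ≤ v ⟨0, hn⟩ ∧ v ⟨0, hn⟩ ≤ 1 := by
  rcases hv with ⟨a, b, hab, hbn, hv⟩ | ⟨a, b, hab, hbn, hv⟩
  · subst hv; dsimp only; split_ifs <;> norm_num
  · subst hv; dsimp only
    have : ¬ b ≤ 0 := by omega
    rw [if_neg this]
    split_ifs <;> norm_num

lemma sq_rel1 (u v p q : ℤ) (he : u * p + v * q = 0) (hu : u ^ 2 = 1)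
    (hv : v ^ 2 = 1) : p ^ 2 = q ^ 2 := by
  linear_combination (u * p - v * q) * he - p ^ 2 * hu + q ^ 2 * hv

lemma sq_rel4 (u v p q : ℤ) (he : u * p + v * q = 0) (hu : u ^ 2 = 1)
    (hv : v ^ 2 = 4) : p ^ 2 = 4 * q ^ 2 := by
  linear_combination (u * p - v * q) * he - p ^ 2 * hu + q ^ 2 * hv

/-- In type `Bₙ` with `n = 2k+1` odd, `n ≥ 5`, the acyclic exchange matrix `B_σ` is
injective on the set of positive roots. -/
theorem Bmat_injOn_posRoots_typeB (k : ℕ) (hk : 2 ≤ k)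
    (σ : Equiv.Perm (Fin (2 * k + 1))) (α β : Fin (2 * k + 1) → ℤ)
    (hα : IsPosRootB (2 * k + 1) α) (hβ : IsPosRootB (2 * k + 1) β)
    (h : (Bmat (cartanB (2 * k + 1)) σ).mulVec α =
         (Bmat (cartanB (2 * k + 1)) σ).mulVec β) :
    α = β := by
  obtain ⟨x, hxdef⟩ : ∃ x : Fin (2 * k + 1) → ℤ, x = α - β := ⟨_, rfl⟩
  have hx : (Bmat (cartanB (2 * k + 1)) σ).mulVec x = 0 := by
    rw [hxdef, Matrix.mulVec_sub, h, sub_self]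
  have step1 : ∀ (m : ℕ) (_ : 1 ≤ m) (_ : m + 1 < 2 * k + 1) (_ : m + 1 ≠ 2 * k)
      (p : m - 1 < 2 * k + 1) (q : m + 1 < 2 * k + 1),
      (x ⟨m - 1, p⟩) ^ 2 = (x ⟨m + 1, q⟩) ^ 2 := by
    intro m h0 hm hne p q
    have pm : m < 2 * k + 1 := by omega
    have he := row_eq_interior σ x hx m pm p q h0
    have hu := Bmat_cartanB_sq_left σ (⟨m, pm⟩ : Fin (2 * k + 1))
      ⟨m - 1, p⟩ (show m - 1 + 1 = m by omega)
    have hv := Bmat_cartanB_sq_right_one σ (⟨m, pm⟩ : Fin (2 * k + 1))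
      ⟨m + 1, q⟩ rfl (show m + 1 ≠ 2 * k + 1 - 1 by omega)
    exact sq_rel1 _ _ _ _ he hu hv
  have step4 : ∀ (m : ℕ) (_ : 1 ≤ m) (_ : m + 1 = 2 * k)
      (p : m - 1 < 2 * k + 1) (q : m + 1 < 2 * k + 1),
      (x ⟨m - 1, p⟩) ^ 2 = 4 * (x ⟨m + 1, q⟩) ^ 2 := by
    intro m h0 hm p q
    have pm : m < 2 * k + 1 := by omega
    have he := row_eq_interior σ x hx m pm p q h0
    have hu := Bmat_cartanB_sq_left σ (⟨m, pm⟩ : Fin (2 * k + 1))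
      ⟨m - 1, p⟩ (show m - 1 + 1 = m by omega)
    have hv := Bmat_cartanB_sq_right_four σ (⟨m, pm⟩ : Fin (2 * k + 1))
      ⟨m + 1, q⟩ rfl (show m + 1 = 2 * k + 1 - 1 by omega)
    exact sq_rel4 _ _ _ _ he hu hv
  have odd_zero : ∀ (j : ℕ) (pj : 2 * j + 1 < 2 * k + 1), x ⟨2 * j + 1, pj⟩ = 0 := by
    intro j
    induction j with
    | zero =>
      intro pj
      have p0 : (0 : ℕ) < 2 * k + 1 := by omega
      have p1 : (1 : ℕ) < 2 * k + 1 := by omega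
      have h1 := row_eq_zero' σ x hx p0 p1
      have hB := Bmat_cartanB_ne_zero_right σ (⟨0, p0⟩ : Fin (2 * k + 1)) ⟨1, p1⟩ rfl
      have hz := (mul_eq_zero.mp h1).resolve_left hB
      have he : (⟨1, p1⟩ : Fin (2 * k + 1)) = ⟨2 * 0 + 1, pj⟩ :=
        Fin.ext (by show (1 : ℕ) = 2 * 0 + 1; omega)
      rw [he] at hz
      exact hz
    | succ j ih =>
      intro pj
      have q1' : 2 * j + 1 < 2 * k + 1 := by omega
      have q1 : 2 * j + 2 - 1 < 2 * k + 1 := by omega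
      have q2 : 2 * j + 2 < 2 * k + 1 := by omega
      have q3 : 2 * j + 2 + 1 < 2 * k + 1 := by omega
      have hprev := ih q1'
      have he := row_eq_interior σ x hx (2 * j + 2) q2 q1 q3 (by omega)
      have hm1 : (⟨2 * j + 2 - 1, q1⟩ : Fin (2 * k + 1)) = ⟨2 * j + 1, q1'⟩ :=
        Fin.ext (by show 2 * j + 2 - 1 = 2 * j + 1; omega)
      rw [hm1, hprev, mul_zero, zero_add] at he
      have hB := Bmat_cartanB_ne_zero_right σ (⟨2 * j + 2, q2⟩ : Fin (2 * k + 1))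
        ⟨2 * j + 2 + 1, q3⟩ rfl
      have hz := (mul_eq_zero.mp he).resolve_left hB
      have hq : (⟨2 * j + 2 + 1, q3⟩ : Fin (2 * k + 1)) = ⟨2 * (j + 1) + 1, pj⟩ :=
        Fin.ext (by show 2 * j + 2 + 1 = 2 * (j + 1) + 1; omega)
      rw [hq] at hz
      exact hz
  have hpos0 : (0 : ℕ) < 2 * k + 1 := by omega
  have hq2k : 2 * k < 2 * k + 1 := by omega
  have even_sq : ∀ (d : ℕ) (_ : 1 ≤ d) (_ : d ≤ k)
      (p : 2 * (k - d) < 2 * k + 1),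
      (x ⟨2 * (k - d), p⟩) ^ 2 = 4 * (x ⟨2 * k, hq2k⟩) ^ 2 := by
    intro d hd1
    induction d, hd1 using Nat.le_induction with
    | base =>
      intro _ p
      have w1 : 2 * k - 1 - 1 < 2 * k + 1 := by omega
      have w2 : 2 * k - 1 + 1 < 2 * k + 1 := by omega
      have hs := step4 (2 * k - 1) (by omega) (by omega) w1 w2
      have h1 : (⟨2 * k - 1 - 1, w1⟩ : Fin (2 * k + 1)) = ⟨2 * (k - 1), p⟩ :=
        Fin.ext (by show 2 * k - 1 - 1 = 2 * (k - 1); omega)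
      have h2 : (⟨2 * k - 1 + 1, w2⟩ : Fin (2 * k + 1)) = ⟨2 * k, hq2k⟩ :=
        Fin.ext (by show 2 * k - 1 + 1 = 2 * k; omega)
      rw [h1, h2] at hs
      exact hs
    | succ d hd ih =>
      intro hdk p
      have pd : 2 * (k - d) < 2 * k + 1 := by omega
      have w1 : 2 * (k - (d + 1)) + 1 - 1 < 2 * k + 1 := by omega
      have w2 : 2 * (k - (d + 1)) + 1 + 1 < 2 * k + 1 := by omega
      have hih := ih (by omega) pd
      have hs := step1 (2 * (k - (d + 1)) + 1) (by omega) (by omega) (by omega) w1 w2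
      have h1 : (⟨2 * (k - (d + 1)) + 1 - 1, w1⟩ : Fin (2 * k + 1)) =
          ⟨2 * (k - (d + 1)), p⟩ :=
        Fin.ext (by show 2 * (k - (d + 1)) + 1 - 1 = 2 * (k - (d + 1)); omega)
      have h2 : (⟨2 * (k - (d + 1)) + 1 + 1, w2⟩ : Fin (2 * k + 1)) =
          ⟨2 * (k - d), pd⟩ :=
        Fin.ext (by show 2 * (k - (d + 1)) + 1 + 1 = 2 * (k - d); omega)
      rw [h1, h2] at hs
      rw [hs]
      exact hih
  have hbα := posRoot_zero_mem α hpos0 hα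
  have hbβ := posRoot_zero_mem β hpos0 hβ
  have hx0 : (x ⟨0, hpos0⟩) ^ 2 ≤ 1 := by
    have hxe : x ⟨0, hpos0⟩ = α ⟨0, hpos0⟩ - β ⟨0, hpos0⟩ := by rw [hxdef]; rfl
    rw [hxe]
    nlinarith [hbα.1, hbα.2, hbβ.1, hbβ.2]
  have w0 : 2 * (k - k) < 2 * k + 1 := by omega
  have hchain := even_sq k (by omega) le_rfl w0
  have h00 : (⟨2 * (k - k), w0⟩ : Fin (2 * k + 1)) = ⟨0, hpos0⟩ :=
    Fin.ext (by show 2 * (k - k) = 0; omega)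
  rw [h00] at hchain
  have hlast : (x ⟨2 * k, hq2k⟩) ^ 2 = 0 := by
    nlinarith [hchain, hx0, sq_nonneg (x ⟨2 * k, hq2k⟩)]
  have even_zero : ∀ (j : ℕ) (_ : j ≤ k) (pj : 2 * j < 2 * k + 1), x ⟨2 * j, pj⟩ = 0 := by
    intro j hj pj
    by_cases hjk : j = k
    · have hq : (⟨2 * j, pj⟩ : Fin (2 * k + 1)) = ⟨2 * k, hq2k⟩ :=
        Fin.ext (by show 2 * j = 2 * k; omega)
      rw [hq]
      exact pow_eq_zero_iff (by norm_num) |>.mp hlast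
    · have wj : 2 * (k - (k - j)) < 2 * k + 1 := by omega
      have hc := even_sq (k - j) (by omega) (by omega) wj
      rw [hlast, mul_zero] at hc
      have hmj : (⟨2 * (k - (k - j)), wj⟩ : Fin (2 * k + 1)) = ⟨2 * j, pj⟩ :=
        Fin.ext (by show 2 * (k - (k - j)) = 2 * j; omega)
      rw [hmj] at hc
      exact pow_eq_zero_iff (by norm_num) |>.mp hc
  have hxz : x = 0 := by
    funext i
    rcases Nat.even_or_odd i.val with ⟨j, hj⟩ | ⟨j, hj⟩
    · have wj : 2 * j < 2 * k + 1 := by omega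
      have hz := even_zero j (by omega) wj
      have hi : i = ⟨2 * j, wj⟩ := Fin.ext (by show i.val = 2 * j; omega)
      rw [hi]; exact hz
    · have wj : 2 * j + 1 < 2 * k + 1 := by omega
      have hz := odd_zero j wj
      have hi : i = ⟨2 * j + 1, wj⟩ := Fin.ext (by show i.val = 2 * j + 1; omega)
      rw [hi]; exact hz
  exact sub_eq_zero.mp (show α - β = 0 from hxdef ▸ hxz)
end
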